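/- arXiv:1105.0859 — 13 statements merged into one kernel-verified Lean document; each statement's English description precedes it below -/
import Mathlib

section
/- For all x in (0, π/2), (1 - cos x)/x ≤ tan(x/2)/x ≤ 2/π. -/
open Real

lemma tan_convex : ConvexOn ℝ (Set.Icc 0 (π/4)) Real.tan := by
  have hsub : ∀ x ∈ Set.Icc (0:ℝ) (π/4), Real.cos x > 0 := by
    intro x hx
    apply Real.cos_pos_of_mem_Ioo
    constructor
    · linarith [hx.1, Real.pi_pos]
    · have := hx.2; linarith [Real.pi_pos]
  apply MonotoneOn.convexOn_of_deriv (convex_Icc _ _)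
  · intro x hx
    exact (Real.continuousAt_tan.2 (ne_of_gt (hsub x hx))).continuousWithinAt
  · intro x hx
    rw [interior_Icc] at hx
    exact (Real.differentiableAt_tan.2 (ne_of_gt (hsub x ⟨le_of_lt hx.1, le_of_lt hx.2⟩))).differentiableWithinAt
  · intro s hs t ht hst
    rw [interior_Icc] at hs ht
    rw [Real.deriv_tan, Real.deriv_tan]
    have hcs : Real.cos s > 0 := hsub s ⟨le_of_lt hs.1, le_of_lt hs.2⟩
    have hct : Real.cos t > 0 := hsub t ⟨le_of_lt ht.1, le_of_lt ht.2⟩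
    have hle : Real.cos t ≤ Real.cos s := by
      apply Real.cos_le_cos_of_nonneg_of_le_pi (le_of_lt hs.1) _ hst
      have := ht.2; linarith [Real.pi_pos]
    exact one_div_le_one_div_of_le (pow_pos hct 2) (pow_le_pow_left₀ hct.le hle 2)

theorem stmt0 (x : ℝ) (hx : 0 < x) (hx2 : x ≤ π/2) :
    (1 - Real.cos x)/x ≤ Real.tan (x/2)/x ∧ Real.tan (x/2)/x ≤ 2/π := by
  have hpi := Real.pi_pos
  have hs : Real.sin (x/2) > 0 := Real.sin_pos_of_pos_of_lt_pi (by linarith) (by linarith)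
  have hc : Real.cos (x/2) > 0 := Real.cos_pos_of_mem_Ioo ⟨by linarith, by linarith⟩
  constructor
  · gcongr
    have hcx : Real.cos x = 1 - 2 * Real.sin (x/2)^2 := by
      have h1 := Real.cos_two_mul' (x/2)
      have h2 := Real.sin_sq_add_cos_sq (x/2)
      have : (2:ℝ) * (x/2) = x := by ring
      rw [this] at h1
      linarith
    rw [hcx, Real.tan_eq_sin_div_cos, le_div_iff₀ hc]
    have hsle : Real.sin x ≤ 1 := Real.sin_le_one x
    have hsx : Real.sin x = 2 * Real.sin (x/2) * Real.cos (x/2) := by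
      have h := Real.sin_two_mul (x/2)
      rwa [show (2:ℝ)*(x/2) = x by ring] at h
    nlinarith
  · rw [div_le_div_iff₀ hx hpi]
    have hx4 : x/2 ≤ π/4 := by linarith
    have h0 : (0:ℝ) ∈ Set.Icc (0:ℝ) (π/4) := ⟨le_refl _, by linarith⟩
    have h1 : (π/4) ∈ Set.Icc (0:ℝ) (π/4) := ⟨by linarith, le_refl _⟩
    set lam : ℝ := (x/2)/(π/4) with hlam
    have hlam0 : 0 ≤ lam := by positivity
    have hlam1 : lam ≤ 1 := by
      rw [hlam, div_le_one (by linarith)]; linarith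
    have key := tan_convex.2 h0 h1 (show (0:ℝ) ≤ 1 - lam from by linarith) hlam0 (by ring)
    have hcomb : (1 - lam) • (0:ℝ) + lam • (π/4) = x/2 := by
      simp only [smul_eq_mul, mul_zero, zero_add]
      rw [hlam]; field_simp
    rw [hcomb] at key
    simp only [Real.tan_pi_div_four, Real.tan_zero, smul_eq_mul, mul_zero, mul_one,
      zero_add] at key
    have : lam = 2*x/π := by rw [hlam]; field_simp; ring
    rw [this] at key
    calc Real.tan (x/2) * π ≤ (2*x/π) * π := by
          exact mul_le_mul_of_nonneg_right key hpi.le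
    _ = 2 * x := by field_simp
end

section
/- For all x in (0, π/2], 1/(π - x) ≤ tan(x/2)/x ≤ 2/π. -/
open Real

lemma sin_frac_mono {a b : ℝ} (ha : 0 ≤ a) (hab : a ≤ b) (hb : b ≤ π) (hb0 : 0 < b) :
    a * Real.sin b ≤ b * Real.sin a := by
  have hcc : ConcaveOn ℝ (Set.Icc 0 π) Real.sin := strictConcaveOn_sin_Icc.concaveOn
  have h0 : (0:ℝ) ∈ Set.Icc (0:ℝ) π := ⟨le_refl 0, Real.pi_pos.le⟩
  have hbmem : b ∈ Set.Icc (0:ℝ) π := ⟨hb0.le, hb⟩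
  have hw1 : 0 ≤ 1 - a / b := by
    have : a / b ≤ 1 := (div_le_one hb0).2 hab
    linarith
  have hw2 : 0 ≤ a / b := div_nonneg ha hb0.le
  have hsum : (1 - a / b) + a / b = 1 := by ring
  have := hcc.2 h0 hbmem hw1 hw2 hsum
  simp only [smul_eq_mul, mul_zero, zero_add, Real.sin_zero] at this
  have hab' : a / b * b = a := div_mul_cancel₀ a hb0.ne'
  rw [hab'] at this
  have h2 := mul_le_mul_of_nonneg_right this hb0.le
  have h3 : a / b * Real.sin b * b = a * Real.sin b := by rw [mul_right_comm, hab']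
  rw [h3] at h2
  linarith [h2, mul_comm (Real.sin a) b]

theorem stmt1 (x : ℝ) (hx : 0 < x) (hx2 : x ≤ π/2) :
    1/(π - x) ≤ Real.tan (x/2)/x ∧ Real.tan (x/2)/x ≤ 2/π := by
  have hpi := Real.pi_pos
  have hx4 : x/2 ≤ π/4 := by linarith
  have hcos : 0 < Real.cos (x/2) := by
    apply Real.cos_pos_of_mem_Ioo
    constructor <;> nlinarith
  constructor
  · -- lower bound
    have key : (x/2) * Real.sin (π/2 - x/2) ≤ (π/2 - x/2) * Real.sin (x/2) :=
      sin_frac_mono (by linarith) (by linarith) (by linarith) (by linarith)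
    rw [Real.sin_pi_div_two_sub] at key
    have htan : x/(π - x) ≤ Real.tan (x/2) := by
      rw [Real.tan_eq_sin_div_cos, div_le_div_iff₀ (by linarith) hcos]
      nlinarith
    rw [div_le_div_iff₀ (by linarith) hx, one_mul]
    calc x = (x/(π-x)) * (π - x) := by
          rw [div_mul_cancel₀ _ (show π - x ≠ 0 by linarith)]
    _ ≤ Real.tan (x/2) * (π - x) := by
        apply mul_le_mul_of_nonneg_right htan (by linarith)
  · -- upper bound via convexity of tan
    have h0 : (0:ℝ) ∈ Set.Icc (0:ℝ) (π/4) := ⟨le_refl 0, by linarith⟩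
    have h4 : (π/4) ∈ Set.Icc (0:ℝ) (π/4) := ⟨by linarith, le_refl _⟩
    have hw2 : 0 ≤ 2*x/π := by positivity
    have hw1 : 0 ≤ 1 - 2*x/π := by
      have : 2*x/π ≤ 1 := by rw [div_le_one hpi]; linarith
      linarith
    have hsum : (1 - 2*x/π) + 2*x/π = 1 := by ring
    have := tan_convex.2 h0 h4 hw1 hw2 hsum
    simp only [smul_eq_mul, mul_zero, zero_add, Real.tan_zero, mul_one] at this
    have harg : 2*x/π * (π/4) = x/2 := by field_simp; ring
    rw [harg, Real.tan_pi_div_four, mul_one] at this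
    rw [div_le_div_iff₀ hx hpi]
    calc Real.tan (x/2) * π ≤ (2*x/π) * π := mul_le_mul_of_nonneg_right this hpi.le
    _ = 2 * x := div_mul_cancel₀ _ hpi.ne'
end

section
/- The function q(x) = (1 - cos x)/x² is strictly decreasing and strictly concave on (0, π/2). -/
open Real

private lemma neg_of_deriv_neg (F F' : ℝ → ℝ) (hd : ∀ x, HasDerivAt F (F' x) x)
    (h0 : F 0 = 0) (hneg : ∀ x ∈ Set.Ioo 0 (π/2), F' x < 0) :
    ∀ x ∈ Set.Ioo 0 (π/2), F x < 0 := by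
  have hanti : StrictAntiOn F (Set.Icc 0 (π/2)) := by
    apply strictAntiOn_of_deriv_neg (convex_Icc _ _)
    · exact fun x _ => (hd x).continuousAt.continuousWithinAt
    · intro x hx
      rw [interior_Icc] at hx
      rw [(hd x).deriv]
      exact hneg x hx
  intro x hx
  have h := hanti (Set.left_mem_Icc.2 (by positivity)) ⟨hx.1.le, hx.2.le⟩ hx.1
  rwa [h0] at h

private lemma hf' : ∀ x : ℝ, HasDerivAt (fun x => x * Real.cos x - Real.sin x)
    (-(x * Real.sin x)) x := by
  intro x
  have := ((hasDerivAt_id' (x:=x)).mul (Real.hasDerivAt_cos x)).sub (Real.hasDerivAt_sin x)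
  exact this.congr_deriv (by ring)

private lemma f_neg : ∀ x ∈ Set.Ioo 0 (π/2),
    x * Real.sin x + 2 * Real.cos x - 2 < 0 := by
  apply neg_of_deriv_neg _ (fun x => x * Real.cos x - Real.sin x)
  · intro x
    have := ((hasDerivAt_id' (x:=x)).mul (Real.hasDerivAt_sin x)).add
      (((Real.hasDerivAt_cos x).const_mul 2).sub_const 2)
    convert this using 1
    · rfl
    · rfl
    · funext y; simp; ring
    · ring
  · simp
  · apply neg_of_deriv_neg _ (fun x => -(x * Real.sin x)) hf'
    · simp
    · intro x hx
      have h1 := Real.sin_pos_of_pos_of_lt_pi hx.1 (hx.2.trans (by linarith [Real.pi_pos]))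
      have := mul_pos hx.1 h1
      linarith

private lemma g'_neg : ∀ x ∈ Set.Ioo 0 (π/2),
    2 * Real.sin x - 2 * x * Real.cos x - x^2 * Real.sin x < 0 := by
  apply neg_of_deriv_neg _ (fun x => -(x^2 * Real.cos x))
  · intro x
    have := (((Real.hasDerivAt_sin x).const_mul 2).sub
      (((hasDerivAt_id' (x:=x)).const_mul 2).mul (Real.hasDerivAt_cos x))).sub
      ((hasDerivAt_pow 2 x).mul (Real.hasDerivAt_sin x))
    exact this.congr_deriv (by ring)
  · simp
  · intro x hx
    have h1 := Real.cos_pos_of_mem_Ioo ⟨by linarith [hx.1, Real.pi_pos], hx.2⟩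
    have := mul_pos (pow_pos hx.1 2) h1
    linarith

private lemma g_neg : ∀ x ∈ Set.Ioo 0 (π/2),
    x^2 * Real.cos x - 4 * x * Real.sin x - 6 * Real.cos x + 6 < 0 := by
  apply neg_of_deriv_neg _
    (fun x => 2 * Real.sin x - 2 * x * Real.cos x - x^2 * Real.sin x)
  · intro x
    have := ((((hasDerivAt_pow 2 x).mul (Real.hasDerivAt_cos x)).sub
      ((((hasDerivAt_id' (x:=x)).const_mul 4)).mul (Real.hasDerivAt_sin x))).sub
      ((Real.hasDerivAt_cos x).const_mul 6)).add_const 6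
    exact this.congr_deriv (by ring)
  · simp
  · exact g'_neg

private lemma q_hasDeriv {x : ℝ} (hx : x ≠ 0) :
    HasDerivAt (fun x : ℝ => (1 - Real.cos x)/x^2)
      ((x * Real.sin x + 2 * Real.cos x - 2) / x^3) x := by
  have := ((hasDerivAt_const x (1:ℝ)).sub (Real.hasDerivAt_cos x)).div
    (hasDerivAt_pow 2 x) (pow_ne_zero 2 hx)
  convert this using 1
  · rfl
  · rfl
  · rfl
  simp only [Pi.sub_apply]
  field_simp
  ring

private lemma q'_hasDeriv {x : ℝ} (hx : x ≠ 0) :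
    HasDerivAt (fun x : ℝ => (x * Real.sin x + 2 * Real.cos x - 2) / x^3)
      ((x^2 * Real.cos x - 4 * x * Real.sin x - 6 * Real.cos x + 6) / x^4) x := by
  have hnum : HasDerivAt (fun x : ℝ => x * Real.sin x + 2 * Real.cos x - 2)
      (x * Real.cos x - Real.sin x) x := by
    have := ((hasDerivAt_id' (x:=x)).mul (Real.hasDerivAt_sin x)).add
      (((Real.hasDerivAt_cos x).const_mul 2).sub_const 2)
    convert this using 1
    · rfl
    · rfl
    · funext y; simp; ring
    · ring
  have := hnum.div (hasDerivAt_pow 3 x) (pow_ne_zero 3 hx)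
  convert this using 1
  · rfl
  · rfl
  · rfl
  field_simp
  ring

theorem stmt3 :
    StrictAntiOn (fun x : ℝ => (1 - Real.cos x)/x^2) (Set.Ioo 0 (π/2)) ∧
    StrictConcaveOn ℝ (Set.Ioo 0 (π/2)) (fun x : ℝ => (1 - Real.cos x)/x^2) := by
  have hcont : ContinuousOn (fun x : ℝ => (1 - Real.cos x)/x^2) (Set.Ioo 0 (π/2)) :=
    fun x hx => (q_hasDeriv (ne_of_gt hx.1)).continuousAt.continuousWithinAt
  have hderiv : ∀ x ∈ Set.Ioo (0:ℝ) (π/2),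
      deriv (fun x : ℝ => (1 - Real.cos x)/x^2) x
        = (x * Real.sin x + 2 * Real.cos x - 2) / x^3 := by
    intro x hx
    exact (q_hasDeriv (ne_of_gt hx.1)).deriv
  constructor
  · apply strictAntiOn_of_deriv_neg (convex_Ioo _ _) hcont
    intro x hx
    rw [interior_Ioo] at hx
    rw [hderiv x hx]
    apply div_neg_of_neg_of_pos (f_neg x hx) (pow_pos hx.1 3)
  · apply strictConcaveOn_of_deriv2_neg (convex_Ioo _ _) hcont
    intro x hx
    rw [interior_Ioo] at hx
    have heq : deriv (fun x : ℝ => (1 - Real.cos x)/x^2)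
        =ᶠ[nhds x] (fun x : ℝ => (x * Real.sin x + 2 * Real.cos x - 2) / x^3) := by
      filter_upwards [eventually_ne_nhds (ne_of_gt hx.1)] with y hy
      exact (q_hasDeriv hy).deriv
    simp only [Function.iterate_succ, Function.iterate_zero, Function.comp_apply, id]
    rw [heq.deriv_eq, (q'_hasDeriv (ne_of_gt hx.1)).deriv]
    apply div_neg_of_neg_of_pos (g_neg x hx) (pow_pos hx.1 4)
end

section
/- The function f(x) = tan(x/2)/x, extended by f(0) = 1/2, is strictly increasing and strictly convex on [0, π/2]. -/
open Real Set Filter Topology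

noncomputable def myF : ℝ → ℝ := fun x : ℝ => if x = 0 then 1/2 else Real.tan (x/2)/x

noncomputable def myD1 : ℝ → ℝ := fun x =>
  (x / (2 * Real.cos (x/2) ^ 2) - Real.tan (x/2)) / x ^ 2

noncomputable def myD2 : ℝ → ℝ := fun x =>
  (x ^ 2 * Real.sin (x/2) / (2 * Real.cos (x/2) ^ 3) - x / Real.cos (x/2) ^ 2
    + 2 * Real.tan (x/2)) / x ^ 3

lemma myCosPos {x : ℝ} (hx1 : 0 ≤ x) (hx2 : x ≤ π/2) : 0 < Real.cos (x/2) := by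
  have hpi := Real.pi_pos
  exact Real.cos_pos_of_mem_Ioo ⟨by linarith, by linarith⟩

lemma myD1At {x : ℝ} (hx : x ∈ Ioo 0 (π/2)) : HasDerivAt myF (myD1 x) x := by
  have hx0 : x ≠ 0 := hx.1.ne'
  have hc : Real.cos (x/2) ≠ 0 := (myCosPos hx.1.le hx.2.le).ne'
  have hhalf : HasDerivAt (fun y : ℝ => y / 2) (1/2) x := (hasDerivAt_id x).div_const 2
  have htan : HasDerivAt (fun y : ℝ => Real.tan (y/2)) (1 / Real.cos (x/2) ^ 2 * (1/2)) x :=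
    by have h := (Real.hasDerivAt_tan hc).comp x hhalf; exact h
  have hg : HasDerivAt (fun y : ℝ => Real.tan (y/2) / y)
      ((1 / Real.cos (x/2) ^ 2 * (1/2) * x - Real.tan (x/2) * 1) / x ^ 2) x :=
    htan.div (hasDerivAt_id x) hx0
  have heq : myF =ᶠ[𝓝 x] fun y : ℝ => Real.tan (y/2) / y := by
    filter_upwards [eventually_ne_nhds hx0] with y hy
    simp [myF, hy]
  have := hg.congr_of_eventuallyEq heq
  refine this.congr_deriv ?_
  unfold myD1
  field_simp

lemma myD2At {x : ℝ} (hx : x ∈ Ioo 0 (π/2)) : HasDerivAt myD1 (myD2 x) x := by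
  have hx0 : x ≠ 0 := hx.1.ne'
  have hc : Real.cos (x/2) ≠ 0 := (myCosPos hx.1.le hx.2.le).ne'
  have hhalf : HasDerivAt (fun y : ℝ => y / 2) (1/2) x := (hasDerivAt_id x).div_const 2
  have htan : HasDerivAt (fun y : ℝ => Real.tan (y/2)) (1 / Real.cos (x/2) ^ 2 * (1/2)) x :=
    by have h := (Real.hasDerivAt_tan hc).comp x hhalf; exact h
  have hcos : HasDerivAt (fun y : ℝ => Real.cos (y/2)) (-Real.sin (x/2) * (1/2)) x :=
    by have h := (Real.hasDerivAt_cos (x/2)).comp x hhalf; exact h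
  have hden : HasDerivAt (fun y : ℝ => 2 * Real.cos (y/2) ^ 2)
      (2 * ((2 : ℕ) * Real.cos (x/2) ^ (2-1) * (-Real.sin (x/2) * (1/2)))) x :=
    (hcos.pow 2).const_mul 2
  have hden0 : 2 * Real.cos (x/2) ^ 2 ≠ 0 := by positivity
  have hA : HasDerivAt (fun y : ℝ => y / (2 * Real.cos (y/2) ^ 2))
      ((1 * (2 * Real.cos (x/2) ^ 2) -
        x * (2 * ((2 : ℕ) * Real.cos (x/2) ^ (2-1) * (-Real.sin (x/2) * (1/2))))) /
        (2 * Real.cos (x/2) ^ 2) ^ 2) x :=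
    (hasDerivAt_id x).div hden hden0
  have hN := hA.sub htan
  have hxsq : HasDerivAt (fun y : ℝ => y ^ 2) ((2 : ℕ) * x ^ (2-1)) x := hasDerivAt_pow 2 x
  have hxsq0 : x ^ 2 ≠ 0 := pow_ne_zero 2 hx0
  have := hN.div hxsq hxsq0
  refine this.congr_deriv ?_
  unfold myD2
  simp only [Pi.sub_apply]
  field_simp
  ring

lemma myD1Pos {x : ℝ} (hx : x ∈ Ioo 0 (π/2)) : 0 < myD1 x := by
  have hx0 : 0 < x := hx.1
  have hc : 0 < Real.cos (x/2) := myCosPos hx.1.le hx.2.le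
  have hsinlt : Real.sin x < x := Real.sin_lt hx0
  have hsin2 : Real.sin x = 2 * Real.sin (x/2) * Real.cos (x/2) := by
    rw [show x = 2 * (x/2) by ring, Real.sin_two_mul]
    ring_nf
  have hnum : x / (2 * Real.cos (x/2) ^ 2) - Real.tan (x/2)
      = (x - 2 * Real.sin (x/2) * Real.cos (x/2)) / (2 * Real.cos (x/2) ^ 2) := by
    rw [Real.tan_eq_sin_div_cos]
    field_simp
  unfold myD1
  rw [hnum]
  apply div_pos (div_pos (by rw [← hsin2]; linarith) (by positivity)) (by positivity)

lemma myD2Pos {x : ℝ} (hx : x ∈ Ioo 0 (π/2)) : 0 < myD2 x := by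
  have hx0 : 0 < x := hx.1
  set u := x / 2 with hu
  have hu0 : 0 < u := by positivity
  have hu1 : u < 1 := by
    have h4 : π < 4 := by linarith [Real.pi_lt_d2]
    simp only [hu]; nlinarith [hx.2]
  have hc : 0 < Real.cos u := myCosPos hx.1.le hx.2.le
  have hs : 0 < Real.sin u := Real.sin_pos_of_pos_of_lt_pi hu0 (by linarith [Real.pi_gt_three])
  have htanu : u < Real.tan u := Real.lt_tan hu0 (by linarith [Real.pi_gt_three])
  have htu : u * Real.cos u < Real.sin u := by
    rw [Real.tan_eq_sin_div_cos] at htanu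
    calc u * Real.cos u < Real.sin u / Real.cos u * Real.cos u := by
          exact mul_lt_mul_of_pos_right htanu hc
      _ = Real.sin u := by field_simp
  have hcb : 1 - u ^ 2 / 2 < Real.cos u := Real.one_sub_sq_div_two_lt_cos hu0.ne'
  have hkey : 0 < u ^ 2 * Real.sin u - u * Real.cos u + Real.sin u * Real.cos u ^ 2 := by
    set s := Real.sin u
    set c := Real.cos u
    nlinarith [mul_pos (mul_pos hu0 hu0) (sub_pos.2 htu),
      mul_pos (mul_pos hc hc) (sub_pos.2 htu),
      mul_pos (sub_pos.2 hcb) (show (0:ℝ) < c + (1 - u^2/2) by nlinarith),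
      mul_pos hu0 hc, sq_nonneg u, mul_pos (mul_pos hu0 hc) (mul_pos hu0 hu0)]
  have hnum : x ^ 2 * Real.sin (x/2) / (2 * Real.cos (x/2) ^ 3) - x / Real.cos (x/2) ^ 2
      + 2 * Real.tan (x/2)
      = 4 * (u ^ 2 * Real.sin u - u * Real.cos u + Real.sin u * Real.cos u ^ 2)
        / (2 * Real.cos u ^ 3) := by
    rw [Real.tan_eq_sin_div_cos, ← hu]
    have : x = 2 * u := by rw [hu]; ring
    rw [this]
    field_simp
    ring
  unfold myD2
  rw [hnum]
  positivity

lemma myCont : ContinuousOn myF (Icc 0 (π/2)) := by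
  intro x hx
  rcases eq_or_ne x 0 with rfl | hx0
  · have h0 : Tendsto (fun y : ℝ => Real.tan y / y) (𝓝[≠] 0) (𝓝 1) := by
      have h := Real.hasDerivAt_tan (x := 0) (by simp)
      rw [hasDerivAt_iff_tendsto_slope] at h
      simp only [Real.cos_zero, one_pow, div_one] at h
      refine h.congr' ?_
      filter_upwards [self_mem_nhdsWithin] with y hy
      simp [slope_def_field, Real.tan_zero]
    have hmap : Tendsto (fun y : ℝ => y / 2) (𝓝[≠] (0:ℝ)) (𝓝[≠] (0:ℝ)) := by
      apply tendsto_nhdsWithin_of_tendsto_nhds_of_eventually_within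
      · have : Tendsto (fun y : ℝ => y / 2) (𝓝 (0:ℝ)) (𝓝 ((0:ℝ)/2)) :=
          (continuous_id.div_const 2).tendsto 0
        simpa using this.mono_left nhdsWithin_le_nhds
      · filter_upwards [self_mem_nhdsWithin] with y hy
        exact div_ne_zero hy two_ne_zero
    have h1 : Tendsto (fun y : ℝ => Real.tan (y/2) / (y/2)) (𝓝[≠] (0:ℝ)) (𝓝 1) :=
      h0.comp hmap
    have h2 : Tendsto myF (𝓝[≠] (0:ℝ)) (𝓝 (1/2)) := by
      have h3 := h1.div_const 2
      rw [show (1:ℝ)/2 = 1/2 from rfl]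
      refine h3.congr' ?_
      filter_upwards [self_mem_nhdsWithin] with y hy
      have hy' : y ≠ 0 := hy
      simp only [myF, if_neg hy']
      rw [div_div]
      rw [div_eq_div_iff (by positivity) hy']
      ring
    have : ContinuousWithinAt myF {(0:ℝ)}ᶜ 0 := by
      have hF0 : myF 0 = 1/2 := by simp [myF]
      unfold ContinuousWithinAt
      rw [hF0]
      exact h2
    exact (continuousWithinAt_compl_self.1 this).continuousWithinAt
  · have hxpos : 0 < x := lt_of_le_of_ne hx.1 (Ne.symm hx0)
    have hc : Real.cos (x/2) ≠ 0 := (myCosPos hx.1 hx.2).ne'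
    have hg : ContinuousAt (fun y : ℝ => Real.tan (y/2) / y) x := by
      have h1 : ContinuousAt (fun y : ℝ => y / 2) x := (continuous_id.div_const 2).continuousAt
      have h2 : ContinuousAt Real.tan (x/2) := Real.continuousAt_tan.2 hc
      have h3 : ContinuousAt (Real.tan ∘ fun y : ℝ => y / 2) x := ContinuousAt.comp (f := fun y : ℝ => y / 2) (x := x) h2 h1
      exact h3.div continuousAt_id hx0
    have heq : (fun y : ℝ => Real.tan (y/2) / y) =ᶠ[𝓝 x] myF := by
      filter_upwards [eventually_ne_nhds hx0] with y hy
      simp [myF, hy]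
    exact (hg.congr heq).continuousWithinAt

theorem stmt4 :
    StrictMonoOn (fun x : ℝ => if x = 0 then 1/2 else Real.tan (x/2)/x) (Set.Icc 0 (π/2)) ∧
    StrictConvexOn ℝ (Set.Icc 0 (π/2)) (fun x : ℝ => if x = 0 then 1/2 else Real.tan (x/2)/x) := by
  have hconv : Convex ℝ (Icc (0:ℝ) (π/2)) := convex_Icc _ _
  have hF : (fun x : ℝ => if x = 0 then 1/2 else Real.tan (x/2)/x) = myF := rfl
  rw [hF]
  constructor
  · apply strictMonoOn_of_deriv_pos hconv myCont
    intro x hx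
    rw [interior_Icc] at hx
    rw [(myD1At hx).deriv]
    exact myD1Pos hx
  · apply strictConvexOn_of_deriv2_pos hconv myCont
    intro x hx
    rw [interior_Icc] at hx
    have hev : deriv myF =ᶠ[𝓝 x] myD1 := by
      filter_upwards [isOpen_Ioo.mem_nhds hx] with y hy
      exact (myD1At hy).deriv
    have h2 : deriv^[2] myF x = deriv (deriv myF) x := rfl
    rw [h2, hev.deriv_eq, (myD2At hx).deriv]
    exact myD2Pos hx
end

section
/- For all x in (0, π/2), 1/(1 + cos(x/2)) < tan(x/2)/x < (1 + 1/cos²(x/2))/4. -/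
open Real

/-- Auxiliary: for `t ∈ (0, π/2)`, `2t < tan t + sin t`. -/
lemma aux_left (t : ℝ) (ht : 0 < t) (ht2 : t < π/2) :
    2*t < Real.tan t + Real.sin t := by
  have key : StrictMonoOn (fun s => Real.tan s + Real.sin s - 2*s) (Set.Ico 0 (π/2)) := by
    apply strictMonoOn_of_deriv_pos (convex_Ico _ _)
    · apply ContinuousOn.sub
      · apply ContinuousOn.add
        · apply Real.continuousOn_tan.mono
          intro s hs
          simp only [Set.mem_setOf_eq]
          have : Real.cos s > 0 := Real.cos_pos_of_mem_Ioo
            ⟨by linarith [hs.1, Real.pi_pos], hs.2⟩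
          linarith
        · exact Real.continuous_sin.continuousOn
      · exact (continuous_const.mul continuous_id).continuousOn
    · intro s hs
      rw [interior_Ico] at hs
      have hc : 0 < Real.cos s := Real.cos_pos_of_mem_Ioo ⟨by linarith [hs.1, Real.pi_pos], hs.2⟩
      have hd : HasDerivAt (fun s => Real.tan s + Real.sin s - 2*s)
          (1 / Real.cos s ^ 2 + Real.cos s - 2*1) s := by
        exact ((Real.hasDerivAt_tan hc.ne').add (Real.hasDerivAt_sin s)).sub
          ((hasDerivAt_id s).const_mul 2)
      rw [hd.deriv]
      have hc1 : Real.cos s < 1 := by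
        have := Real.cos_lt_cos_of_nonneg_of_le_pi (le_refl 0)
          (by linarith [Real.pi_pos, hs.2]) hs.1
        simpa using this
      rw [div_add' _ _ _ (by positivity), div_sub' (by positivity)]
      apply div_pos _ (by positivity)
      nlinarith [sq_nonneg (Real.cos s - 1), sq_nonneg (Real.cos s)]
  have h0 : (0:ℝ) ∈ Set.Ico 0 (π/2) := ⟨le_refl _, by linarith [Real.pi_pos]⟩
  have ht' : t ∈ Set.Ico 0 (π/2) := ⟨ht.le, ht2⟩
  have := key h0 ht' ht
  simp only [Real.tan_zero, Real.sin_zero] at this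
  linarith

/-- Auxiliary: for `t ∈ (0, π/2)`, `2 tan t < 2t + t * tan t ^ 2`. -/
lemma aux_right (t : ℝ) (ht : 0 < t) (ht2 : t < π/2) :
    2 * Real.tan t < 2*t + t * Real.tan t ^ 2 := by
  have key : StrictMonoOn (fun s => 2*s + s * Real.tan s ^ 2 - 2 * Real.tan s)
      (Set.Ico 0 (π/2)) := by
    have hcont : ContinuousOn Real.tan (Set.Ico 0 (π/2)) := by
      apply Real.continuousOn_tan.mono
      intro s hs
      simp only [Set.mem_setOf_eq]
      have : Real.cos s > 0 := Real.cos_pos_of_mem_Ioo ⟨by linarith [hs.1, Real.pi_pos], hs.2⟩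
      linarith
    apply strictMonoOn_of_deriv_pos (convex_Ico _ _)
    · apply ContinuousOn.sub
      · exact ((continuous_const.mul continuous_id).continuousOn).add
          (continuousOn_id.mul (hcont.pow 2))
      · exact continuous_const.continuousOn.mul hcont
    · intro s hs
      rw [interior_Ico] at hs
      have hc : 0 < Real.cos s := Real.cos_pos_of_mem_Ioo ⟨by linarith [hs.1, Real.pi_pos], hs.2⟩
      have htan : HasDerivAt Real.tan (1 / Real.cos s ^ 2) s := Real.hasDerivAt_tan hc.ne'
      have hd : HasDerivAt (fun s => 2*s + s * Real.tan s ^ 2 - 2 * Real.tan s)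
          (2*1 + (1 * Real.tan s ^ 2 + s * (2 * Real.tan s ^ 1 * (1 / Real.cos s ^ 2)))
            - 2 * (1 / Real.cos s ^ 2)) s := by
        exact (((hasDerivAt_id s).const_mul 2).add
          ((hasDerivAt_id s).mul (htan.pow 2))).sub (htan.const_mul 2)
      rw [hd.deriv]
      have hsin : Real.sin s < s := Real.sin_lt hs.1
      have hsinpos : 0 < Real.sin s := Real.sin_pos_of_pos_of_lt_pi hs.1
        (by linarith [Real.pi_pos, hs.2])
      rw [Real.tan_eq_sin_div_cos]
      have hc2 : (0:ℝ) < Real.cos s ^ 2 := by positivity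
      field_simp
      have h1 : Real.sin s * Real.sin s < s * Real.sin s :=
        mul_lt_mul_of_pos_right hsin hsinpos
      have hfac : 0 < Real.cos s ^ 3 + 2*s*Real.sin s - Real.cos s := by
        nlinarith [h1, Real.cos_le_one s, Real.sin_sq_add_cos_sq s, hc]
      have hmul := mul_pos (show (0:ℝ) < Real.cos s ^ 4 by positivity) hfac
      have hp : (Real.sin s^2 + Real.cos s^2) * Real.cos s^5 = Real.cos s^5 := by
        rw [Real.sin_sq_add_cos_sq]; ring
      nlinarith [hmul, hp]
  have h0 : (0:ℝ) ∈ Set.Ico 0 (π/2) := ⟨le_refl _, by linarith [Real.pi_pos]⟩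
  have ht' : t ∈ Set.Ico 0 (π/2) := ⟨ht.le, ht2⟩
  have := key h0 ht' ht
  simp only [Real.tan_zero] at this
  nlinarith [this]

theorem stmt6 (x : ℝ) (hx : 0 < x) (hx2 : x < π/2) :
    1/(1 + Real.cos (x/2)) < Real.tan (x/2)/x ∧
    Real.tan (x/2)/x < (1 + 1/(Real.cos (x/2))^2)/4 := by
  set t := x/2 with hT
  have ht : 0 < t := by positivity
  have ht2 : t < π/2 := by
    have := Real.pi_pos
    simp only [hT]; linarith
  have hc : 0 < Real.cos t := Real.cos_pos_of_mem_Ioo ⟨by linarith [Real.pi_pos], ht2⟩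
  have htanpos : 0 < Real.tan t := Real.tan_pos_of_pos_of_lt_pi_div_two ht ht2
  have hsin : Real.sin t = Real.tan t * Real.cos t := by
    rw [Real.tan_eq_sin_div_cos]; field_simp
  constructor
  · rw [div_lt_div_iff₀ (by linarith) hx]
    have h1 := aux_left t ht ht2
    rw [hsin] at h1
    nlinarith [h1]
  · rw [div_lt_div_iff₀ hx (by norm_num)]
    have h2 := aux_right t ht ht2
    have h3 : 1 / Real.cos t ^ 2 = 1 + Real.tan t ^ 2 := by
      rw [Real.tan_eq_sin_div_cos]
      field_simp
      linarith [Real.sin_sq_add_cos_sq t]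
    rw [h3]
    nlinarith [h2]
end

section
/- For all x in (0, π/2), sinh(x)/x < 3/(2 + cos x) < (2 + cosh x)/3. -/
open Real

/-- Generic positivity from derivative positivity on (0, c). -/
private lemma aux_pos (f f' : ℝ → ℝ) (c : ℝ)
    (hd : ∀ y : ℝ, HasDerivAt f (f' y) y) (hf0 : f 0 = 0)
    (hpos : ∀ y ∈ Set.Ioo (0:ℝ) c, 0 < f' y) :
    ∀ x ∈ Set.Ioo (0:ℝ) c, 0 < f x := by
  intro x hx
  have hmono : StrictMonoOn f (Set.Icc 0 c) := by
    apply strictMonoOn_of_deriv_pos (convex_Icc 0 c)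
    · exact fun y _ => (hd y).continuousAt.continuousWithinAt
    · intro y hy
      rw [interior_Icc] at hy
      rw [(hd y).deriv]
      exact hpos y hy
  have h0c : (0:ℝ) ≤ c := le_of_lt (lt_trans hx.1 hx.2)
  have := hmono (Set.mem_Icc.mpr ⟨le_refl 0, h0c⟩)
      (Set.mem_Icc.mpr ⟨hx.1.le, hx.2.le⟩) hx.1
  simpa [hf0] using this

/-- sinh t < t * cosh t for t > 0. -/
private lemma sinh_lt_mul_cosh {t : ℝ} (ht : 0 < t) : Real.sinh t < t * Real.cosh t := by
  have := aux_pos (fun y => y * Real.cosh y - Real.sinh y) (fun y => y * Real.sinh y) (t + 1)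
    (by
      intro y
      have h1 := (hasDerivAt_id y).mul (Real.hasDerivAt_cosh y)
      have h2 := h1.sub (Real.hasDerivAt_sinh y)
      exact h2.congr_deriv (by simp only [id_eq]; ring))
    (by simp)
    (by
      intro y hy
      exact mul_pos hy.1 (Real.sinh_pos_iff.mpr hy.1))
    t ⟨ht, by linarith⟩
  linarith [show (0:ℝ) < t * Real.cosh t - Real.sinh t from this]

/-- Key lemma 1: cos t * sinh t < sin t * cosh t for 0 < t < π/2. -/
private lemma key1 {t : ℝ} (ht : 0 < t) (ht2 : t < π/2) :
    Real.cos t * Real.sinh t < Real.sin t * Real.cosh t := by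
  have hcos : 0 < Real.cos t := Real.cos_pos_of_mem_Ioo ⟨by linarith [Real.pi_pos], ht2⟩
  have hcosh : 0 < Real.cosh t := Real.cosh_pos t
  have htan : t < Real.tan t := Real.lt_tan ht ht2
  have h1 : t * Real.cos t < Real.sin t := by
    rw [Real.tan_eq_sin_div_cos] at htan
    calc t * Real.cos t < (Real.sin t / Real.cos t) * Real.cos t :=
          (mul_lt_mul_iff_left₀ hcos).mpr htan
      _ = Real.sin t := by field_simp
  have h2 : Real.sinh t < t * Real.cosh t := sinh_lt_mul_cosh ht
  calc Real.cos t * Real.sinh t < Real.cos t * (t * Real.cosh t) :=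
        (mul_lt_mul_iff_right₀ hcos).mpr h2
    _ = (t * Real.cos t) * Real.cosh t := by ring
    _ < Real.sin t * Real.cosh t := (mul_lt_mul_iff_left₀ hcosh).mpr h1

/-- Key lemma 2: sin t * sinh t < cos t * cosh t for 0 < t < π/4. -/
private lemma key2 {t : ℝ} (ht : 0 < t) (ht2 : t < π/4) :
    Real.sin t * Real.sinh t < Real.cos t * Real.cosh t := by
  have hpi := Real.pi_pos
  have hsin : 0 < Real.sin t := Real.sin_pos_of_pos_of_lt_pi ht (by linarith)
  have hsc : Real.sin t < Real.cos t := by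
    rw [← Real.sin_pi_div_two_sub]
    apply Real.strictMonoOn_sin
    · constructor <;> [linarith; linarith]
    · constructor <;> [linarith; linarith]
    · linarith
  have hsh : Real.sinh t < Real.cosh t := Real.sinh_lt_cosh t
  have hshpos : 0 < Real.sinh t := Real.sinh_pos_iff.mpr ht
  nlinarith

/-- sinh x < sin x * cosh x for 0 < x < π/2. -/
private lemma keyA {x : ℝ} (hx : 0 < x) (hx2 : x < π/2) :
    Real.sinh x < Real.sin x * Real.cosh x := by
  have hpi := Real.pi_pos
  set t := x/2 with htdef
  have ht : 0 < t := by positivity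
  have ht2 : t < π/4 := by rw [htdef]; linarith
  have h1 := key1 ht (by linarith)
  have h2 := key2 ht ht2
  have hx' : x = 2*t := by rw [htdef]; ring
  have hpyth := Real.sin_sq_add_cos_sq t
  rw [hx', Real.sin_two_mul, Real.sinh_two_mul, Real.cosh_two_mul]
  have key : 2*Real.sin t*Real.cos t*(Real.cosh t^2+Real.sinh t^2) - 2*Real.sinh t*Real.cosh t
      = 2*((Real.sin t*Real.cosh t - Real.cos t*Real.sinh t)
        *(Real.cos t*Real.cosh t - Real.sin t*Real.sinh t)) := by
    linear_combination (2*Real.sinh t*Real.cosh t) * hpyth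
  have hp := mul_pos (sub_pos.mpr h1) (sub_pos.mpr h2)
  nlinarith [key, hp]

/-- sinh x * (1 - cos x) > sin x * (cosh x - 1) for 0 < x < π/2. -/
private lemma keyB {x : ℝ} (hx : 0 < x) (hx2 : x < π/2) :
    Real.sin x * (Real.cosh x - 1) < Real.sinh x * (1 - Real.cos x) := by
  have hpi := Real.pi_pos
  set t := x/2 with htdef
  have ht : 0 < t := by positivity
  have ht2 : t < π/4 := by rw [htdef]; linarith
  have h1 := key1 ht (by linarith)
  have hsin : 0 < Real.sin t := Real.sin_pos_of_pos_of_lt_pi ht (by linarith)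
  have hsinh : 0 < Real.sinh t := Real.sinh_pos_iff.mpr ht
  have hx' : x = 2*t := by rw [htdef]; ring
  have hpyth := Real.sin_sq_add_cos_sq t
  have hpyth2 := Real.cosh_sq_sub_sinh_sq t
  rw [hx', Real.sin_two_mul, Real.sinh_two_mul, Real.cosh_two_mul, Real.cos_two_mul]
  have key : 2*Real.sinh t*Real.cosh t*(1-(2*Real.cos t^2-1))
      - 2*Real.sin t*Real.cos t*(Real.cosh t^2+Real.sinh t^2-1)
      = 4*Real.sin t*Real.sinh t*(Real.sin t*Real.cosh t - Real.cos t*Real.sinh t) := by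
    linear_combination (-4*Real.sinh t*Real.cosh t)*hpyth + (-2*Real.sin t*Real.cos t)*hpyth2
  have hp := mul_pos (mul_pos hsin hsinh) (sub_pos.mpr h1)
  nlinarith [key, hp]

theorem stmt8 (x : ℝ) (hx : 0 < x) (hx2 : x < π/2) :
    Real.sinh x/x < 3/(2 + Real.cos x) ∧ 3/(2 + Real.cos x) < (2 + Real.cosh x)/3 := by
  have hpi := Real.pi_pos
  have hcospos : (0:ℝ) < 2 + Real.cos x := by nlinarith [Real.neg_one_le_cos x]
  -- Part 1 : 3x - sinh x * (2 + cos x) > 0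
  have hG : ∀ y ∈ Set.Ioo (0:ℝ) (π/2),
      0 < 3 - Real.cosh y * (2 + Real.cos y) + Real.sinh y * Real.sin y := by
    apply aux_pos _ (fun y => 2 * (Real.sin y * Real.cosh y - Real.sinh y))
    · intro y
      have h1 := (Real.hasDerivAt_cosh y).mul ((Real.hasDerivAt_cos y).const_add 2)
      have h2 := (Real.hasDerivAt_sinh y).mul (Real.hasDerivAt_sin y)
      have h4 := (((hasDerivAt_const y (3:ℝ)).sub h1).add h2)
      exact h4.congr_deriv (by ring)
    · norm_num
    · intro y hy
      have := keyA hy.1 hy.2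
      linarith
  have hF : 0 < 3 * x - Real.sinh x * (2 + Real.cos x) := by
    apply aux_pos (fun y => 3 * y - Real.sinh y * (2 + Real.cos y))
        (fun y => 3 - Real.cosh y * (2 + Real.cos y) + Real.sinh y * Real.sin y) (π/2)
    · intro y
      have h1 := (Real.hasDerivAt_sinh y).mul ((Real.hasDerivAt_cos y).const_add 2)
      have h2 := ((hasDerivAt_id y).const_mul (3:ℝ)).sub h1
      exact h2.congr_deriv (by ring)
    · simp
    · exact hG
    · exact ⟨hx, hx2⟩
  -- Part 2 chain
  have hh : ∀ y ∈ Set.Ioo (0:ℝ) (π/2),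
      0 < Real.cosh y - Real.cos y - Real.sinh y * Real.sin y := by
    apply aux_pos _ (fun y => Real.sinh y * (1 - Real.cos y) - Real.sin y * (Real.cosh y - 1))
    · intro y
      have h1 := (Real.hasDerivAt_sinh y).mul (Real.hasDerivAt_sin y)
      have h2 := ((Real.hasDerivAt_cosh y).sub (Real.hasDerivAt_cos y)).sub h1
      exact h2.congr_deriv (by ring)
    · simp
    · intro y hy
      have := keyB hy.1 hy.2
      linarith
  have hg : ∀ y ∈ Set.Ioo (0:ℝ) (π/2),
      0 < Real.sinh y * (2 + Real.cos y) - Real.sin y * (2 + Real.cosh y) := by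
    apply aux_pos _ (fun y => 2 * (Real.cosh y - Real.cos y - Real.sinh y * Real.sin y))
    · intro y
      have h1 := (Real.hasDerivAt_sinh y).mul ((Real.hasDerivAt_cos y).const_add 2)
      have h2 := (Real.hasDerivAt_sin y).mul ((Real.hasDerivAt_cosh y).const_add 2)
      have h3 := h1.sub h2
      exact h3.congr_deriv (by ring)
    · simp
    · intro y hy
      have := hh y hy
      linarith
  have hf : 0 < (2 + Real.cos x) * (2 + Real.cosh x) - 9 := by
    apply aux_pos (fun y => (2 + Real.cos y) * (2 + Real.cosh y) - 9)
        (fun y => Real.sinh y * (2 + Real.cos y) - Real.sin y * (2 + Real.cosh y)) (π/2)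
    · intro y
      have h1 := ((Real.hasDerivAt_cos y).const_add 2).mul ((Real.hasDerivAt_cosh y).const_add 2)
      have h2 := h1.sub_const 9
      exact h2.congr_deriv (by ring)
    · norm_num
    · exact hg
    · exact ⟨hx, hx2⟩
  constructor
  · rw [div_lt_div_iff₀ hx hcospos]
    linarith
  · rw [div_lt_div_iff₀ hcospos (by norm_num : (0:ℝ) < 3)]
    linarith
end

section
/- For all x in (0, π/2), cos x · cosh x < 1. -/
open Real

theorem stmt9 (x : ℝ) (hx : 0 < x) (hx2 : x < π/2) :
    Real.cos x * Real.cosh x < 1 := by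
  have hg : StrictAntiOn (fun y => Real.cos y * Real.sinh y - Real.sin y * Real.cosh y)
      (Set.Icc 0 (π/2)) := by
    apply strictAntiOn_of_deriv_neg (convex_Icc _ _)
    · fun_prop
    · intro z hz
      rw [interior_Icc] at hz
      have hd : deriv (fun y => Real.cos y * Real.sinh y - Real.sin y * Real.cosh y) z
          = -2 * (Real.sin z * Real.sinh z) := by
        have h1 : HasDerivAt (fun y => Real.cos y * Real.sinh y - Real.sin y * Real.cosh y)
            ((-Real.sin z) * Real.sinh z + Real.cos z * Real.cosh z
              - (Real.cos z * Real.cosh z + Real.sin z * Real.sinh z)) z := by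
          exact ((Real.hasDerivAt_cos z).mul (Real.hasDerivAt_sinh z)).sub
            ((Real.hasDerivAt_sin z).mul (Real.hasDerivAt_cosh z))
        rw [h1.deriv]; ring
      rw [hd]
      have hs : 0 < Real.sin z := Real.sin_pos_of_pos_of_lt_pi hz.1
        (lt_trans hz.2 (by linarith [Real.pi_pos]))
      have hsh : 0 < Real.sinh z := Real.sinh_pos_iff.mpr hz.1
      nlinarith
  have hf : StrictAntiOn (fun y => Real.cos y * Real.cosh y) (Set.Icc 0 (π/2)) := by
    apply strictAntiOn_of_deriv_neg (convex_Icc _ _)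
    · fun_prop
    · intro z hz
      rw [interior_Icc] at hz
      have hd : deriv (fun y => Real.cos y * Real.cosh y) z
          = Real.cos z * Real.sinh z - Real.sin z * Real.cosh z := by
        have h1 : HasDerivAt (fun y => Real.cos y * Real.cosh y)
            ((-Real.sin z) * Real.cosh z + Real.cos z * Real.sinh z) z :=
          (Real.hasDerivAt_cos z).mul (Real.hasDerivAt_cosh z)
        rw [h1.deriv]; ring
      rw [hd]
      have := hg (Set.left_mem_Icc.mpr (by positivity)) ⟨hz.1.le, hz.2.le⟩ hz.1
      simpa using this
  have := hf (Set.left_mem_Icc.mpr (by positivity)) ⟨hx.le, hx2.le⟩ hx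
  simpa using this
end

section
/- For all x in (0, π/2), cot x + coth x < 2/x, tan x · tanh x > x², and tan x + tanh x > 2x. -/
open Real

private lemma hH (y : ℝ) : HasDerivAt (fun t => Real.sin t * Real.cosh t - Real.cos t * Real.sinh t)
    (2 * Real.sin y * Real.sinh y) y := by
  have := ((Real.hasDerivAt_sin y).mul (Real.hasDerivAt_cosh y)).sub
    ((Real.hasDerivAt_cos y).mul (Real.hasDerivAt_sinh y))
  exact this.congr_deriv (by ring)

private lemma hG (y : ℝ) : HasDerivAt
    (fun t => Real.sin t * Real.cosh t + Real.cos t * Real.sinh t - 2*t*Real.cos t*Real.cosh t)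
    (2 * y * (Real.sin y * Real.cosh y - Real.cos y * Real.sinh y)) y := by
  have h1 := ((Real.hasDerivAt_sin y).mul (Real.hasDerivAt_cosh y)).add
    ((Real.hasDerivAt_cos y).mul (Real.hasDerivAt_sinh y))
  have h2 := (((hasDerivAt_id y).const_mul (2:ℝ)).mul (Real.hasDerivAt_cos y)).mul
    (Real.hasDerivAt_cosh y)
  have := h1.sub h2
  exact this.congr_deriv (by simp only [id_eq, Pi.add_apply, Pi.mul_apply]; ring)

private lemma hF (y : ℝ) : HasDerivAt
    (fun t => 2 * Real.sin t * Real.sinh t - t * (Real.sin t * Real.cosh t + Real.cos t * Real.sinh t))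
    (Real.sin y * Real.cosh y + Real.cos y * Real.sinh y - 2*y*Real.cos y*Real.cosh y) y := by
  have h1 := (((Real.hasDerivAt_sin y).const_mul (2:ℝ)).mul (Real.hasDerivAt_sinh y))
  have h2 := (hasDerivAt_id y).mul (((Real.hasDerivAt_sin y).mul (Real.hasDerivAt_cosh y)).add
    ((Real.hasDerivAt_cos y).mul (Real.hasDerivAt_sinh y)))
  have := h1.sub h2
  exact this.congr_deriv (by simp only [id_eq, Pi.add_apply, Pi.mul_apply]; ring)

private lemma pos_on_aux {f : ℝ → ℝ} {f' : ℝ → ℝ}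
    (hd : ∀ y, HasDerivAt f (f' y) y)
    (hpos : ∀ y ∈ Set.Ioo (0:ℝ) (π/2), 0 < f' y)
    (h0 : f 0 = 0) :
    ∀ x ∈ Set.Ioo (0:ℝ) (π/2), 0 < f x := by
  intro x hxm
  have hdiff : Differentiable ℝ f := fun y => (hd y).differentiableAt
  have hmono : StrictMonoOn f (Set.Icc 0 (π/2)) := by
    apply strictMonoOn_of_deriv_pos (convex_Icc _ _) hdiff.continuous.continuousOn
    intro y hy
    rw [interior_Icc] at hy
    rw [(hd y).deriv]
    exact hpos y hy
  have hpi : (0:ℝ) < π/2 := by positivity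
  have h01 : (0:ℝ) ∈ Set.Icc (0:ℝ) (π/2) := ⟨le_refl 0, hpi.le⟩
  have hx1 : x ∈ Set.Icc (0:ℝ) (π/2) := ⟨hxm.1.le, hxm.2.le⟩
  have := hmono h01 hx1 hxm.1
  rwa [h0] at this

theorem stmt12 (x : ℝ) (hx : 0 < x) (hx2 : x < π/2) :
    Real.cos x/Real.sin x + Real.cosh x/Real.sinh x < 2/x ∧
    Real.tan x * Real.tanh x > x^2 ∧
    Real.tan x + Real.tanh x > 2*x := by
  have hxm : x ∈ Set.Ioo (0:ℝ) (π/2) := ⟨hx, hx2⟩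
  -- H > 0
  have hHpos : ∀ y ∈ Set.Ioo (0:ℝ) (π/2),
      0 < Real.sin y * Real.cosh y - Real.cos y * Real.sinh y := by
    apply pos_on_aux hH
    · intro y hy
      have hs : 0 < Real.sin y := Real.sin_pos_of_pos_of_lt_pi hy.1 (lt_trans hy.2 (by linarith [Real.pi_pos]))
      have hsh : 0 < Real.sinh y := Real.sinh_pos_iff.mpr hy.1
      positivity
    · simp
  have hGpos : ∀ y ∈ Set.Ioo (0:ℝ) (π/2),
      0 < Real.sin y * Real.cosh y + Real.cos y * Real.sinh y - 2*y*Real.cos y*Real.cosh y := by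
    apply pos_on_aux hG
    · intro y hy
      have := hHpos y hy
      have hy1 := hy.1
      positivity
    · simp
  have hFpos : ∀ y ∈ Set.Ioo (0:ℝ) (π/2),
      0 < 2 * Real.sin y * Real.sinh y - y * (Real.sin y * Real.cosh y + Real.cos y * Real.sinh y) := by
    apply pos_on_aux hF
    · intro y hy; exact hGpos y hy
    · simp
  have key := hFpos x hxm
  have hs : 0 < Real.sin x := Real.sin_pos_of_pos_of_lt_pi hx (lt_trans hx2 (by linarith [Real.pi_pos]))
  have hc : 0 < Real.cos x := Real.cos_pos_of_mem_Ioo ⟨by linarith [Real.pi_pos], hx2⟩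
  have hsh : 0 < Real.sinh x := Real.sinh_pos_iff.mpr hx
  have hch : 0 < Real.cosh x := Real.cosh_pos x
  -- part 1
  have h1 : Real.cos x/Real.sin x + Real.cosh x/Real.sinh x < 2/x := by
    rw [div_add_div _ _ (ne_of_gt hs) (ne_of_gt hsh), div_lt_div_iff₀ (by positivity) hx]
    nlinarith [key]
  have h1' : x * (Real.cos x * Real.sinh x + Real.cosh x * Real.sin x) < 2 * (Real.sin x * Real.sinh x) := by
    rw [div_add_div _ _ (ne_of_gt hs) (ne_of_gt hsh), div_lt_div_iff₀ (by positivity) hx] at h1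
    nlinarith
  have hsq := mul_self_lt_mul_self (by positivity :
      (0:ℝ) ≤ x * (Real.cos x * Real.sinh x + Real.cosh x * Real.sin x)) h1'
  have hab : x^2 * (4 * (Real.cos x * Real.sinh x) * (Real.cosh x * Real.sin x))
      < 4 * (Real.sin x * Real.sinh x)^2 := by
    nlinarith [hsq, mul_nonneg (sq_nonneg x) (sq_nonneg (Real.cos x * Real.sinh x - Real.cosh x * Real.sin x))]
  have h2 : Real.tan x * Real.tanh x > x^2 := by
    rw [Real.tan_eq_sin_div_cos, Real.tanh_eq_sinh_div_cosh]
    rw [gt_iff_lt, div_mul_div_comm, lt_div_iff₀ (by positivity)]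
    nlinarith [hab, mul_pos hs hsh, mul_pos (mul_pos hc hch) (mul_pos hs hsh)]
  refine ⟨h1, h2, ?_⟩
  have ht : 0 < Real.tan x := Real.tan_pos_of_pos_of_lt_pi_div_two hx hx2
  have hth : 0 < Real.tanh x := by
    rw [Real.tanh_eq_sinh_div_cosh]; positivity
  nlinarith [sq_nonneg (Real.tan x - Real.tanh x), sq_nonneg (Real.tan x + Real.tanh x - 2*x)]
end

section
/- Let f : I → J be a bijection between subsets of (0, ∞) such that x ↦ f(x)/x is strictly increasing on I. Then for any x ∈ I and y ∈ J with f(x) ≥ y, one has f(x)·f⁻¹(y) ≥ x·y; and if f(x) ≤ y, then f(x)·f⁻¹(y) ≤ x·y. -/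
open Real

theorem stmt13 (I J : Set ℝ) (hI : I ⊆ Set.Ioi 0) (hJ : J ⊆ Set.Ioi 0)
    (f finv : ℝ → ℝ) (hbij : Set.BijOn f I J)
    (hinv : Set.InvOn finv f I J)
    (hg : StrictMonoOn (fun x => f x / x) I) :
    ∀ x ∈ I, ∀ y ∈ J,
      (y ≤ f x → x * y ≤ f x * finv y) ∧ (f x ≤ y → f x * finv y ≤ x * y) := by
  intro x hx y hy
  obtain ⟨z, hz, hfz⟩ := hbij.surjOn hy
  have hfinv : finv y = z := by rw [← hfz, hinv.1 hz]
  have hx0 : (0:ℝ) < x := hI hx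
  have hz0 : (0:ℝ) < z := hI hz
  have hy0 : (0:ℝ) < y := hJ hy
  have hfx0 : (0:ℝ) < f x := hJ (hbij.mapsTo hx)
  rw [hfinv]
  constructor
  · intro hle
    have hzx : z ≤ x := by
      by_contra h
      push_neg at h
      have h1 := hg hx hz h
      simp only [hfz] at h1
      have h2 : y / z < f x / x := by
        calc y / z ≤ f x / z := by gcongr
        _ < f x / x := by gcongr
      linarith
    have h3 := hg.monotoneOn hz hx hzx
    simp only [hfz] at h3
    rw [div_le_div_iff₀ hz0 hx0] at h3
    nlinarith
  · intro hle
    have hxz : x ≤ z := by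
      by_contra h
      push_neg at h
      have h1 := hg hz hx h
      simp only [hfz] at h1
      have h2 : f x / x ≤ y / z := by
        calc f x / x ≤ y / x := by gcongr
        _ ≤ y / z := by gcongr
      linarith
    have h3 := hg.monotoneOn hx hz hxz
    simp only [hfz] at h3
    rw [div_le_div_iff₀ hx0 hz0] at h3
    nlinarith
end

section
/- For all x in (0, π/2), sin x > tanh x. -/
open Real

private lemma hd1 (x : ℝ) : HasDerivAt
    (fun x => Real.cos x - Real.cosh x * Real.cos x + Real.sinh x * Real.sin x)
    (Real.sin x * (2 * Real.cosh x - 1)) x := by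
  have h := ((Real.hasDerivAt_cos x).sub ((Real.hasDerivAt_cosh x).mul (Real.hasDerivAt_cos x))).add
    ((Real.hasDerivAt_sinh x).mul (Real.hasDerivAt_sin x))
  exact h.congr_deriv (by ring)

private lemma lemA : StrictMonoOn
    (fun x => Real.cos x - Real.cosh x * Real.cos x + Real.sinh x * Real.sin x)
    (Set.Icc 0 (π/2)) := by
  apply strictMonoOn_of_deriv_pos (convex_Icc _ _)
  · exact ((Real.continuous_cos.sub (Real.continuous_cosh.mul Real.continuous_cos)).add
      (Real.continuous_sinh.mul Real.continuous_sin)).continuousOn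
  · intro x hx
    rw [interior_Icc] at hx
    rw [(hd1 x).deriv]
    have h1 : 0 < Real.sin x :=
      Real.sin_pos_of_pos_of_lt_pi hx.1 (by linarith [Real.pi_pos, hx.2])
    nlinarith [Real.one_le_cosh x]

private lemma hd2 (x : ℝ) : HasDerivAt
    (fun x => Real.sin x - Real.sinh x * Real.cos x)
    (Real.cos x - Real.cosh x * Real.cos x + Real.sinh x * Real.sin x) x := by
  have h := (Real.hasDerivAt_sin x).sub ((Real.hasDerivAt_sinh x).mul (Real.hasDerivAt_cos x))
  exact h.congr_deriv (by ring)

private lemma lemB : StrictMonoOn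
    (fun x => Real.sin x - Real.sinh x * Real.cos x) (Set.Icc 0 (π/2)) := by
  apply strictMonoOn_of_deriv_pos (convex_Icc _ _)
  · exact (Real.continuous_sin.sub (Real.continuous_sinh.mul Real.continuous_cos)).continuousOn
  · intro x hx
    rw [interior_Icc] at hx
    rw [(hd2 x).deriv]
    have h0 : (0:ℝ) ∈ Set.Icc 0 (π/2) := by
      constructor <;> [rfl; positivity]
    have hxm : x ∈ Set.Icc 0 (π/2) := ⟨le_of_lt hx.1, le_of_lt hx.2⟩
    have := lemA h0 hxm hx.1
    simpa using this

theorem stmt14 (x : ℝ) (hx : 0 < x) (hx2 : x < π/2) :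
    Real.sin x > Real.tanh x := by
  have hcos : 0 < Real.cos x := Real.cos_pos_of_mem_Ioo ⟨by linarith [Real.pi_pos], hx2⟩
  -- step 1: sinh x * cos x < sin x
  have h0 : (0:ℝ) ∈ Set.Icc 0 (π/2) := by constructor <;> [rfl; positivity]
  have hxm : x ∈ Set.Icc 0 (π/2) := ⟨le_of_lt hx, le_of_lt hx2⟩
  have hB := lemB h0 hxm hx
  simp only [Real.sin_zero, Real.sinh_zero, Real.cos_zero] at hB
  have h1 : Real.sinh x * Real.cos x < Real.sin x := by simpa using hB
  -- step 2: sinh x < tan x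
  have h2 : Real.sinh x < Real.tan x := by
    rw [Real.tan_eq_sin_div_cos, lt_div_iff₀ hcos]
    linarith
  -- step 3: arctan (sinh x) < x
  have h3 : Real.arctan (Real.sinh x) < x := by
    have := Real.arctan_strictMono h2
    rwa [Real.arctan_tan (by linarith [Real.pi_pos]) hx2] at this
  -- step 4: sin (arctan (sinh x)) = tanh x
  have hcosh : Real.cosh x = Real.sqrt (1 + Real.sinh x ^ 2) := by
    rw [show (1:ℝ) + Real.sinh x ^2 = Real.cosh x ^2 by nlinarith [Real.cosh_sq_sub_sinh_sq x]]
    rw [Real.sqrt_sq (Real.cosh_pos x).le]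
  have h4 : Real.sin (Real.arctan (Real.sinh x)) = Real.tanh x := by
    rw [Real.sin_arctan, Real.tanh_eq_sinh_div_cosh, hcosh]
  -- conclude
  have h5 : Real.sin (Real.arctan (Real.sinh x)) < Real.sin x := by
    apply Real.strictMonoOn_sin
    · constructor
      · linarith [Real.neg_pi_div_two_lt_arctan (Real.sinh x)]
      · linarith [Real.arctan_lt_pi_div_two (Real.sinh x)]
    · constructor <;> linarith [Real.pi_pos]
    · exact h3
  linarith [h4 ▸ h5]
end

section
/- For positive reals a ≠ b, with A = (a+b)/2, G = √(ab), and L = (a-b)/(ln a - ln b) the logarithmic mean, one has L²·A + L·G² > 2·A·G² and 2·L·A + L·G > 3·A·G. -/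
open Real

lemma aux1 {s : ℝ} (hs : 0 < s) : Real.sinh s < s * Real.cosh s := by
  have h : ∀ x : ℝ, HasDerivAt (fun x => x * Real.cosh x - Real.sinh x) (x * Real.sinh x) x := by
    intro x
    have := ((hasDerivAt_id x).mul (Real.hasDerivAt_cosh x)).sub (Real.hasDerivAt_sinh x)
    simp only [id_eq, one_mul] at this
    refine this.congr_deriv ?_
    ring
  have mono : StrictMonoOn (fun x => x * Real.cosh x - Real.sinh x) (Set.Ici 0) := by
    apply strictMonoOn_of_deriv_pos (convex_Ici 0)
    · exact ((continuous_id.mul Real.continuous_cosh).sub Real.continuous_sinh).continuousOn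
    · intro x hx
      rw [interior_Ici, Set.mem_Ioi] at hx
      rw [(h x).deriv]
      exact mul_pos hx (Real.sinh_pos_iff.mpr hx)
  have := mono Set.self_mem_Ici (Set.mem_Ici.mpr hs.le) hs
  simp at this
  linarith

lemma aux2 {s : ℝ} (hs : 0 < s) :
    3 * Real.sinh s * Real.cosh s + s * (Real.sinh s)^2 < 3 * s * (Real.cosh s)^2 := by
  have h : ∀ x : ℝ, HasDerivAt
      (fun x => 3 * x * (Real.cosh x)^2 - 3 * Real.sinh x * Real.cosh x - x * (Real.sinh x)^2)
      (4 * x * Real.sinh x * Real.cosh x - 4 * (Real.sinh x)^2) x := by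
    intro x
    have h1 : HasDerivAt (fun x : ℝ => 3 * x) 3 x := by
      simpa using (hasDerivAt_id x).const_mul 3
    have h2 : HasDerivAt (fun x : ℝ => (Real.cosh x)^2)
        (2 * (Real.cosh x)^1 * Real.sinh x) x := (Real.hasDerivAt_cosh x).pow 2
    have h3 : HasDerivAt (fun x : ℝ => (Real.sinh x)^2)
        (2 * (Real.sinh x)^1 * Real.cosh x) x := (Real.hasDerivAt_sinh x).pow 2
    have h4 : HasDerivAt (fun x : ℝ => 3 * Real.sinh x) (3 * Real.cosh x) x :=
      (Real.hasDerivAt_sinh x).const_mul 3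
    have := ((h1.mul h2).sub (h4.mul (Real.hasDerivAt_cosh x))).sub ((hasDerivAt_id x).mul h3)
    simp only [id_eq, pow_one, one_mul] at this
    refine this.congr_deriv ?_
    ring
  have mono : StrictMonoOn
      (fun x => 3 * x * (Real.cosh x)^2 - 3 * Real.sinh x * Real.cosh x - x * (Real.sinh x)^2)
      (Set.Ici 0) := by
    apply strictMonoOn_of_deriv_pos (convex_Ici 0)
    · fun_prop
    · intro x hx
      rw [interior_Ici, Set.mem_Ioi] at hx
      rw [(h x).deriv]
      have hsp := Real.sinh_pos_iff.mpr hx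
      nlinarith [mul_pos hsp (sub_pos.mpr (aux1 hx))]
  have := mono Set.self_mem_Ici (Set.mem_Ici.mpr hs.le) hs
  simp at this
  linarith

lemma aux3 {s : ℝ} (hs : 0 < s) : s^3 * Real.cosh s < (Real.sinh s)^3 := by
  set r : ℝ → ℝ := fun x => (Real.sinh x)^3 / (x^3 * Real.cosh x) with hr
  have hden : ∀ x : ℝ, 0 < x → (0:ℝ) < x^3 * Real.cosh x := by
    intro x hx; positivity
  have hd : ∀ x : ℝ, 0 < x → HasDerivAt r
      ((3 * (Real.sinh x)^2 * Real.cosh x * (x^3 * Real.cosh x)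
        - (Real.sinh x)^3 * (3 * x^2 * Real.cosh x + x^3 * Real.sinh x))
        / (x^3 * Real.cosh x)^2) x := by
    intro x hx
    have hn : HasDerivAt (fun x => (Real.sinh x)^3)
        (3 * (Real.sinh x)^2 * Real.cosh x) x := by
      have := (Real.hasDerivAt_sinh x).pow 3
      refine this.congr_deriv ?_
      norm_num
    have hdd : HasDerivAt (fun x : ℝ => x^3 * Real.cosh x)
        (3 * x^2 * Real.cosh x + x^3 * Real.sinh x) x := by
      have := ((hasDerivAt_pow 3 x).mul (Real.hasDerivAt_cosh x))
      refine this.congr_deriv ?_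
      norm_num
    exact hn.div hdd (ne_of_gt (hden x hx))
  have mono : StrictMonoOn r (Set.Ioi 0) := by
    apply strictMonoOn_of_deriv_pos (convex_Ioi 0)
    · apply ContinuousOn.div
      · fun_prop
      · fun_prop
      · intro x hx; exact ne_of_gt (hden x hx)
    · intro x hx
      rw [interior_Ioi, Set.mem_Ioi] at hx
      rw [(hd x hx).deriv]
      apply div_pos
      · have hχ := aux2 hx
        have hsp := Real.sinh_pos_iff.mpr hx
        nlinarith [mul_pos (mul_pos (pow_pos hx 2) (pow_pos hsp 2))
          (sub_pos.mpr hχ)]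
      · positivity
  have hlim : Filter.Tendsto r (nhdsWithin 0 (Set.Ioi 0)) (nhds 1) := by
    have hslope : Filter.Tendsto (fun x => Real.sinh x / x)
        (nhdsWithin 0 {(0:ℝ)}ᶜ) (nhds 1) := by
      have := hasDerivAt_iff_tendsto_slope.mp (Real.hasDerivAt_sinh 0)
      rw [Real.cosh_zero] at this
      refine this.congr fun x => ?_
      simp [slope_def_field]
    have hs' : Filter.Tendsto (fun x => Real.sinh x / x)
        (nhdsWithin 0 (Set.Ioi 0)) (nhds 1) :=
      hslope.mono_left (nhdsWithin_mono _ (fun x hx => ne_of_gt hx))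
    have hc : Filter.Tendsto (fun x => Real.cosh x)
        (nhdsWithin 0 (Set.Ioi 0)) (nhds 1) := by
      have := (Real.continuous_cosh.tendsto 0).mono_left
        (nhdsWithin_le_nhds (s := Set.Ioi (0:ℝ)))
      rwa [Real.cosh_zero] at this
    have : Filter.Tendsto (fun x => (Real.sinh x / x)^3 / Real.cosh x)
        (nhdsWithin 0 (Set.Ioi 0)) (nhds 1) := by
      have := ((hs'.pow 3).div hc (by norm_num))
      norm_num at this
      exact this
    refine this.congr fun x => ?_
    simp [hr, div_pow, div_div]
  have hge : (1:ℝ) ≤ r (s/2) := by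
    refine le_of_tendsto hlim ?_
    filter_upwards [Ioo_mem_nhdsGT_of_mem (Set.mem_Ico.mpr ⟨le_refl 0, half_pos hs⟩)] with x hx
    exact (mono hx.1 (Set.mem_Ioi.mpr (half_pos hs)) hx.2).le
  have hlt : r (s/2) < r s :=
    mono (Set.mem_Ioi.mpr (half_pos hs)) (Set.mem_Ioi.mpr hs) (by linarith)
  have h1 : 1 < r s := lt_of_le_of_lt hge hlt
  rw [hr] at h1
  exact (one_lt_div (hden s hs)).mp h1

lemma key {a b : ℝ} (hb : 0 < b) (hba : b < a) :
    a * b * ((a + b) / 2) < ((a - b) / (Real.log a - Real.log b))^3 := by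
  have ha : 0 < a := hb.trans hba
  have hlog : Real.log b < Real.log a := Real.log_lt_log hb hba
  obtain ⟨s, hsdef⟩ : ∃ s : ℝ, s = (Real.log a - Real.log b) / 2 := ⟨_, rfl⟩
  have hs : 0 < s := by
    rw [hsdef]; exact div_pos (sub_pos.mpr hlog) two_pos
  have hab : (0:ℝ) < a * b := mul_pos ha hb
  obtain ⟨g, hgdef⟩ : ∃ g : ℝ, g = Real.sqrt (a * b) := ⟨_, rfl⟩
  have hg : 0 < g := hgdef ▸ Real.sqrt_pos.mpr hab
  have hg2 : g ^ 2 = a * b := hgdef ▸ Real.sq_sqrt hab.le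
  have hexpa : Real.exp (Real.log a / 2) = Real.sqrt a := by
    rw [Real.sqrt_eq_rpow, Real.rpow_def_of_pos ha]
    ring_nf
  have hexpb : Real.exp (Real.log b / 2) = Real.sqrt b := by
    rw [Real.sqrt_eq_rpow, Real.rpow_def_of_pos hb]
    ring_nf
  have hexps : Real.exp s = Real.sqrt a / Real.sqrt b := by
    rw [hsdef, show (Real.log a - Real.log b) / 2 = Real.log a / 2 - Real.log b / 2 by ring,
      Real.exp_sub, hexpa, hexpb]
  have hexpns : Real.exp (-s) = Real.sqrt b / Real.sqrt a := by
    rw [Real.exp_neg, hexps, inv_div]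
  have hsa : (0:ℝ) < Real.sqrt a := Real.sqrt_pos.mpr ha
  have hsb : (0:ℝ) < Real.sqrt b := Real.sqrt_pos.mpr hb
  have hsa2 : Real.sqrt a ^ 2 = a := Real.sq_sqrt ha.le
  have hsb2 : Real.sqrt b ^ 2 = b := Real.sq_sqrt hb.le
  have hgmul : g = Real.sqrt a * Real.sqrt b := by
    rw [hgdef, Real.sqrt_mul ha.le]
  have hsinh : Real.sinh s = (a - b) / (2 * g) := by
    rw [Real.sinh_eq, hexps, hexpns, div_sub_div _ _ hsb.ne' hsa.ne', div_div, hgmul]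
    rw [div_eq_div_iff (by positivity) (by positivity)]
    linear_combination (2 * Real.sqrt a * Real.sqrt b) * hsa2
      - (2 * Real.sqrt a * Real.sqrt b) * hsb2
  have hcosh : Real.cosh s = (a + b) / (2 * g) := by
    rw [Real.cosh_eq, hexps, hexpns, div_add_div _ _ hsb.ne' hsa.ne', div_div, hgmul]
    rw [div_eq_div_iff (by positivity) (by positivity)]
    linear_combination (2 * Real.sqrt a * Real.sqrt b) * hsa2
      + (2 * Real.sqrt a * Real.sqrt b) * hsb2
  have h3 := aux3 hs
  rw [hsinh, hcosh] at h3
  have hlba : Real.log a - Real.log b = 2 * s := by rw [hsdef]; ring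
  rw [hlba, div_pow, lt_div_iff₀ (by positivity : (0:ℝ) < (2*s)^3)]
  rw [div_pow, show s ^ 3 * ((a + b) / (2 * g)) = (s^3 * (a+b)) / (2*g) by ring,
    div_lt_div_iff₀ (by positivity) (by positivity)] at h3
  rw [show s^3*(a+b)*(2*g)^3 = (4*s^3*(a*b)*(a+b)) * (2*g) by rw [← hg2]; ring] at h3
  have h5 : 4*s^3*(a*b)*(a+b) < (a-b)^3 :=
    (mul_lt_mul_iff_left₀ (by positivity : (0:ℝ) < 2*g)).mp h3
  calc a * b * ((a + b) / 2) * (2*s)^3 = 4*s^3*(a*b)*(a+b) := by ring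
    _ < _ := h5

theorem stmt16 (a b : ℝ) (ha : 0 < a) (hb : 0 < b) (hab : a ≠ b)
    (A G L : ℝ) (hA : A = (a+b)/2) (hG : G = Real.sqrt (a*b))
    (hL : L = (a-b)/(Real.log a - Real.log b)) :
    L^2*A + L*G^2 > 2*A*G^2 ∧ 2*L*A + L*G > 3*A*G := by
  have hApos : 0 < A := by rw [hA]; positivity
  have hGpos : 0 < G := by rw [hG]; exact Real.sqrt_pos.mpr (by positivity)
  have hG2 : G ^ 2 = a * b := by rw [hG]; exact Real.sq_sqrt (by positivity)
  have hK : G^2 * A < L^3 := by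
    rcases lt_or_gt_of_ne hab with h | h
    · have hkey := key ha h
      rw [hG2, hA, hL, show (a-b)/(Real.log a - Real.log b)
          = (b-a)/(Real.log b - Real.log a) by
        rw [show b - a = -(a-b) by ring, show Real.log b - Real.log a
          = -(Real.log a - Real.log b) by ring, neg_div_neg_eq]]
      calc a*b*((a+b)/2) = b*a*((b+a)/2) := by ring
        _ < _ := hkey
    · have hkey := key hb h
      rw [hG2, hA, hL]
      exact hkey
  have hLpos : 0 < L := by
    rcases lt_or_gt_of_ne hab with h | h
    · have hlog : Real.log a < Real.log b := Real.log_lt_log ha h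
      rw [hL]
      exact div_pos_of_neg_of_neg (by linarith) (by linarith)
    · have hlog : Real.log b < Real.log a := Real.log_lt_log hb h
      rw [hL]
      exact div_pos (by linarith) (by linarith)
  constructor
  · have h1 : 0 < L * (L^2*A + L*G^2 - 2*A*G^2) := by
      nlinarith [mul_pos hApos (sub_pos.mpr hK),
        mul_nonneg (sq_nonneg G) (sq_nonneg (A - L))]
    rcases mul_pos_iff.mp h1 with ⟨_, h⟩ | ⟨h', _⟩
    · linarith
    · linarith
  · have hAG : 27 * A^2 * G ≤ (2*A + G)^3 := by
      nlinarith [mul_nonneg (sq_nonneg (A - G)) (by positivity : (0:ℝ) ≤ 8*A + G)]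
    have p1 : (0:ℝ) < (2*A + G)^3 := by positivity
    have c1 : (G^2*A) * (2*A+G)^3 < L^3 * (2*A+G)^3 :=
      mul_lt_mul_of_pos_right hK p1
    have c2 : (G^2*A) * (27*A^2*G) ≤ (G^2*A) * (2*A+G)^3 :=
      mul_le_mul_of_nonneg_left hAG (by positivity)
    have hcube : (3*A*G)^3 < (L*(2*A+G))^3 := by nlinarith [c1, c2]
    have := lt_of_pow_lt_pow_left₀ 3 (by positivity : (0:ℝ) ≤ L*(2*A+G)) hcube
    linarith
end

section
/- For all x in (0, π/2), sin(x)/x > ∛(cos x) > 3·cos x/(2·cos x + 1). -/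
open Real

private lemma aux_mono (f f' : ℝ → ℝ) (hd : ∀ y, HasDerivAt f (f' y) y)
    (h0 : 0 ≤ f 0) (hp : ∀ y, 0 < y → 0 ≤ f' y) {x : ℝ} (hx : 0 ≤ x) : 0 ≤ f x := by
  have hmono : MonotoneOn f (Set.Ici 0) := by
    apply monotoneOn_of_deriv_nonneg (convex_Ici 0)
    · exact fun y _ => (hd y).continuousAt.continuousWithinAt
    · intro y _; exact (hd y).differentiableAt.differentiableWithinAt
    · intro y hy
      rw [interior_Ici] at hy
      rw [(hd y).deriv]
      exact hp y hy
  have h := hmono Set.self_mem_Ici hx hx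
  linarith

private lemma sin_taylor3 {x : ℝ} (hx : 0 ≤ x) : x - x^3/6 ≤ Real.sin x := by
  have h := aux_mono (fun y => Real.sin y - (y - y^3/6))
      (fun y => Real.cos y - (1 - y^2/2))
      (fun y => by
        have h1 := (Real.hasDerivAt_sin y).sub
          ((hasDerivAt_id y).sub ((hasDerivAt_pow 3 y).div_const 6))
        refine h1.congr_deriv ?_
        simp
        ring)
      (by simp)
      (fun y _ => by linarith [Real.one_sub_sq_div_two_le_cos (x := y)]) hx
  simpa using h

private lemma cos_taylor4 {x : ℝ} (hx : 0 ≤ x) : Real.cos x ≤ 1 - x^2/2 + x^4/24 := by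
  have h := aux_mono (fun y => 1 - y^2/2 + y^4/24 - Real.cos y)
      (fun y => Real.sin y - (y - y^3/6))
      (fun y => by
        have h1 := (((hasDerivAt_const y (1:ℝ)).sub ((hasDerivAt_pow 2 y).div_const 2)).add
          ((hasDerivAt_pow 4 y).div_const 24)).sub (Real.hasDerivAt_cos y)
        refine h1.congr_deriv ?_
        simp
        ring)
      (by simp)
      (fun y hy => by linarith [sin_taylor3 hy.le]) hx
  simpa using h

theorem stmt17 (x : ℝ) (hx : 0 < x) (hx2 : x < π/2) :
    Real.sin x/x > (Real.cos x) ^ ((1:ℝ)/3) ∧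
    (Real.cos x) ^ ((1:ℝ)/3) > 3*Real.cos x/(2*Real.cos x + 1) := by
  have hpi : x < 2 := lt_of_lt_of_le hx2 (by nlinarith [Real.pi_lt_d2])
  have hcos : 0 < Real.cos x := Real.cos_pos_of_mem_Ioo ⟨by linarith, hx2⟩
  have hsin : 0 < Real.sin x := Real.sin_pos_of_pos_of_lt_pi hx
    (by nlinarith [Real.pi_gt_three])
  have hcos1 : Real.cos x < 1 := by
    nlinarith [Real.sin_sq_add_cos_sq x]
  constructor
  · -- sin x / x > (cos x)^(1/3)
    have hs3 := sin_taylor3 hx.le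
    have hc4 := cos_taylor4 hx.le
    have h0 : 0 < x - x^3/6 := by nlinarith
    have hcube : x^3 * Real.cos x < Real.sin x ^ 3 := by
      have hA : (x - x^3/6)^3 ≤ Real.sin x ^ 3 :=
        pow_le_pow_left₀ h0.le hs3 3
      nlinarith [mul_pos (pow_pos hx 7) (show (0:ℝ) < 9 - x^2 by nlinarith),
        pow_pos hx 3]
    have hA : 0 < Real.sin x / x := div_pos hsin hx
    have hkey : Real.cos x < (Real.sin x / x)^3 := by
      rw [div_pow, lt_div_iff₀ (by positivity)]
      linarith [hcube]
    have h1 : (Real.cos x) ^ ((1:ℝ)/3) < ((Real.sin x / x)^3) ^ ((1:ℝ)/3) :=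
      Real.rpow_lt_rpow hcos.le hkey (by norm_num)
    have h2 : ((Real.sin x / x)^3) ^ ((1:ℝ)/3) = Real.sin x / x := by
      rw [← Real.rpow_natCast (Real.sin x / x) 3, ← Real.rpow_mul hA.le]
      norm_num
    rw [h2] at h1
    exact h1
  · -- (cos x)^(1/3) > 3 cos x / (2 cos x + 1)
    set t := (Real.cos x) ^ ((1:ℝ)/3) with ht
    have ht0 : 0 < t := Real.rpow_pos_of_pos hcos _
    have ht1 : t < 1 := Real.rpow_lt_one hcos.le hcos1 (by norm_num)
    have htc : t^3 = Real.cos x := by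
      rw [ht, ← Real.rpow_natCast ((Real.cos x) ^ ((1:ℝ)/3)) 3, ← Real.rpow_mul hcos.le]
      norm_num
    rw [← htc, gt_iff_lt, div_lt_iff₀ (by nlinarith)]
    have h1 : 0 < (t - 1)^2 := by nlinarith
    nlinarith [mul_pos ht0 (mul_pos h1 (show (0:ℝ) < 2*t+1 by linarith))]
end

section
/- For all x > 0, sinh(x)/x > ∛(cosh x) > 3·cosh x/(2·cosh x + 1). -/
open Real Set Filter Topology

private lemma pos_of_deriv (f f' : ℝ → ℝ) (hd : ∀ u, HasDerivAt f (f' u) u)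
    (h0 : f 0 = 0) (hp : ∀ u > 0, 0 < f' u) : ∀ u > 0, 0 < f u := by
  intro u hu
  have hm : StrictMonoOn f (Ici 0) := by
    apply strictMonoOn_of_deriv_pos (convex_Ici 0)
    · exact fun x _ => ((hd x).differentiableAt).continuousAt.continuousWithinAt
    · intro x hx
      rw [interior_Ici, mem_Ioi] at hx
      rw [(hd x).deriv]
      exact hp x hx
  have := hm (self_mem_Ici) (le_of_lt hu : (0:ℝ) ≤ u) hu
  rwa [h0] at this

private lemma key1_s18 : ∀ u > 0, 0 < u * Real.cosh u - Real.sinh u := by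
  apply pos_of_deriv _ (fun u => u * Real.sinh u)
  · intro u
    have := ((hasDerivAt_id u).mul (Real.hasDerivAt_cosh u)).sub (Real.hasDerivAt_sinh u)
    simp only [id_eq] at this
    exact this.congr_deriv (by ring)
  · simp
  · intro u hu; exact mul_pos hu (Real.sinh_pos_iff.2 hu)

private lemma key2_s18 : ∀ u > 0, 0 < u * Real.sinh u - 2 * Real.cosh u + 2 := by
  apply pos_of_deriv _ (fun u => u * Real.cosh u - Real.sinh u)
  · intro u
    have := (((hasDerivAt_id u).mul (Real.hasDerivAt_sinh u)).sub
      ((Real.hasDerivAt_cosh u).const_mul 2)).add_const 2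
    simp only [id_eq] at this
    exact this.congr_deriv (by ring)
  · simp
  · exact key1_s18

private lemma key3 : ∀ u > 0, 0 < u * Real.cosh u + 2 * u - 3 * Real.sinh u := by
  apply pos_of_deriv _ (fun u => u * Real.sinh u - 2 * Real.cosh u + 2)
  · intro u
    have := (((hasDerivAt_id u).mul (Real.hasDerivAt_cosh u)).add
      ((hasDerivAt_id u).const_mul 2)).sub ((Real.hasDerivAt_sinh u).const_mul 3)
    simp only [id_eq] at this
    exact this.congr_deriv (by ring)
  · simp
  · exact key2_s18

private lemma key4 (x : ℝ) (hx : 0 < x) :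
    3 * Real.sinh x * Real.cosh x < x * (2 * Real.cosh x ^ 2 + 1) := by
  have h := key3 (2 * x) (by linarith)
  rw [Real.cosh_two_mul, Real.sinh_two_mul] at h
  nlinarith [h, Real.sinh_sq x]

theorem stmt18 (x : ℝ) (hx : 0 < x) :
    Real.sinh x/x > (Real.cosh x) ^ ((1:ℝ)/3) ∧
    (Real.cosh x) ^ ((1:ℝ)/3) > 3*Real.cosh x/(2*Real.cosh x + 1) := by
  have hc := Real.cosh_pos x
  have hc1 : 1 < Real.cosh x := Real.one_lt_cosh.2 (ne_of_gt hx)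
  -- Part 1: Lazarević
  set h : ℝ → ℝ := fun y => 3 * Real.log (Real.sinh y) - 3 * Real.log y - Real.log (Real.cosh y) with hh
  have hd : ∀ y > 0, HasDerivAt h
      (3 * ((Real.sinh y)⁻¹ * Real.cosh y) - 3 * y⁻¹ - (Real.cosh y)⁻¹ * Real.sinh y) y := by
    intro y hy
    have hs := Real.sinh_pos_iff.2 hy
    have d1 : HasDerivAt (fun y => Real.log (Real.sinh y)) ((Real.sinh y)⁻¹ * Real.cosh y) y :=
      (Real.hasDerivAt_log (ne_of_gt hs)).comp y (Real.hasDerivAt_sinh y)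
    have d2 : HasDerivAt Real.log y⁻¹ y := Real.hasDerivAt_log (ne_of_gt hy)
    have d3 : HasDerivAt (fun y => Real.log (Real.cosh y)) ((Real.cosh y)⁻¹ * Real.sinh y) y :=
      (Real.hasDerivAt_log (ne_of_gt (Real.cosh_pos y))).comp y (Real.hasDerivAt_cosh y)
    exact ((d1.const_mul 3).sub (d2.const_mul 3)).sub d3
  have hmono : StrictMonoOn h (Ioi 0) := by
    apply strictMonoOn_of_deriv_pos (convex_Ioi 0)
    · exact fun y hy => ((hd y hy).differentiableAt).continuousAt.continuousWithinAt
    · intro y hy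
      rw [interior_Ioi, mem_Ioi] at hy
      rw [(hd y hy).deriv]
      have hs := Real.sinh_pos_iff.2 hy
      have hcy := Real.cosh_pos y
      have hk := key4 y hy
      have hsq : Real.sinh y ^ 2 = Real.cosh y ^ 2 - 1 := Real.sinh_sq y
      have heq : 3 * ((Real.sinh y)⁻¹ * Real.cosh y) - 3 * y⁻¹ - (Real.cosh y)⁻¹ * Real.sinh y
          = (y * (3 * Real.cosh y ^ 2 - Real.sinh y ^ 2) - 3 * Real.sinh y * Real.cosh y) / (y * Real.sinh y * Real.cosh y) := by
        field_simp
        ring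
      rw [heq]
      apply div_pos ?_ (by positivity)
      rw [hsq]
      nlinarith [hk]
  -- limit at 0
  have hslope : Tendsto (fun y => Real.sinh y / y) (𝓝[>] 0) (𝓝 1) := by
    have h0 : HasDerivAt Real.sinh 1 0 := by simpa using Real.hasDerivAt_sinh 0
    have := hasDerivAt_iff_tendsto_slope.1 h0
    have h2 : Tendsto (slope Real.sinh 0) (𝓝[>] 0) (𝓝 1) :=
      this.mono_left (nhdsWithin_mono 0 (fun y hy => ne_of_gt hy))
    refine h2.congr' ?_
    filter_upwards [self_mem_nhdsWithin] with y hy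
    simp [slope, hy, div_eq_inv_mul]
  have hlim : Tendsto h (𝓝[>] 0) (𝓝 0) := by
    have t1 : Tendsto (fun y => Real.log (Real.sinh y / y)) (𝓝[>] 0) (𝓝 0) := by
      have := (Real.continuousAt_log one_ne_zero).tendsto.comp hslope
      simpa [Function.comp_def] using this
    have t2 : Tendsto (fun y => Real.log (Real.cosh y)) (𝓝[>] 0) (𝓝 0) := by
      have hca : ContinuousAt (fun y => Real.log (Real.cosh y)) 0 :=
        (Real.continuousAt_log (ne_of_gt (Real.cosh_pos 0))).comp Real.continuous_cosh.continuousAt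
      have h2 : Tendsto (fun y => Real.log (Real.cosh y)) (𝓝[>] (0:ℝ)) (𝓝 (Real.log (Real.cosh 0))) :=
        hca.tendsto.mono_left nhdsWithin_le_nhds
      simpa using h2
    have : Tendsto (fun y => 3 * Real.log (Real.sinh y / y) - Real.log (Real.cosh y)) (𝓝[>] 0) (𝓝 0) := by
      have := (t1.const_mul 3).sub t2
      simpa using this
    refine this.congr' ?_
    filter_upwards [self_mem_nhdsWithin] with y hy
    have hs := Real.sinh_pos_iff.2 (mem_Ioi.1 hy)
    rw [Real.log_div (ne_of_gt hs) (ne_of_gt (mem_Ioi.1 hy))]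
    simp [hh]; ring
  have hpos : 0 < h x := by
    have hx2 : (0:ℝ) < x / 2 := by linarith
    have hge : 0 ≤ h (x / 2) := by
      refine le_of_tendsto hlim ?_
      filter_upwards [Ioo_mem_nhdsGT_of_mem (by constructor <;> linarith : (0:ℝ) ∈ Ico 0 (x/2))]
        with y hy
      exact le_of_lt (hmono (mem_Ioi.2 hy.1) (mem_Ioi.2 hx2) hy.2)
    exact lt_of_le_of_lt hge (hmono (mem_Ioi.2 hx2) (mem_Ioi.2 hx) (by linarith))
  have hs := Real.sinh_pos_iff.2 hx
  have ha : 0 < Real.sinh x / x := div_pos hs hx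
  have hcube : Real.cosh x < (Real.sinh x / x) ^ (3:ℕ) := by
    have hlog : Real.log (Real.cosh x) < Real.log ((Real.sinh x / x) ^ (3:ℕ)) := by
      rw [Real.log_pow, Real.log_div (ne_of_gt hs) (ne_of_gt hx)]
      simp only [hh] at hpos
      push_cast
      linarith
    exact (Real.log_lt_log_iff hc (by positivity)).1 hlog
  constructor
  · have := Real.rpow_lt_rpow hc.le hcube (by norm_num : (0:ℝ) < 1/3)
    rwa [← Real.rpow_natCast (Real.sinh x / x) 3, ← Real.rpow_mul ha.le,
      (by norm_num : ((3:ℕ):ℝ) * (1/3) = 1), Real.rpow_one] at this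
  · set t := Real.cosh x ^ ((1:ℝ)/3) with hT
    have ht1 : 1 < t := by
      rw [hT]
      exact Real.one_lt_rpow_iff_of_pos hc |>.2 (Or.inl ⟨hc1, by norm_num⟩)
    have ht3 : t ^ (3:ℕ) = Real.cosh x := by
      rw [hT, ← Real.rpow_natCast (Real.cosh x ^ ((1:ℝ)/3)) 3, ← Real.rpow_mul hc.le]
      norm_num
    rw [gt_iff_lt, div_lt_iff₀ (by linarith), ← ht3]
    nlinarith [sq_nonneg (t - 1), ht1]
end
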